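/- Absolute continuity of the moving boundary (equation (6.5)): Let d̄ > 0, let ϱ : ℝ → ℝ be nondecreasing and right-continuous with Lebesgue–Stieltjes measure μ_ϱ, and let I : ℝ → ℝ be a bounded, nondecreasing, right-continuous function with I(s) = 0 for all s ≤ 0. Then for every t ≥ 0, ∫₀^{d̄} ϱ(r) I(t−r) dr = ϱ(0) ∫₀^t I(s) ds − ϱ(d̄) ∫₀^t I(s−d̄) ds + ∫₀^t (∫_{(0,d̄]} I(s−r) dμ_ϱ(r)) ds; in particular, t ↦ ∫_{t−d̄}^t ϱ(t−s) I(s) ds is absolutely continuous on [0,∞). -/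

import Mathlib

open MeasureTheory Set Filter Topology

private lemma bdd_integrableOn {ν : Measure ℝ} {s : Set ℝ} (hs : MeasurableSet s)
    (hνs : ν s ≠ ⊤) {f : ℝ → ℝ} (hm : AEStronglyMeasurable f (ν.restrict s)) {M : ℝ}
    (hb : ∀ x ∈ s, |f x| ≤ M) : IntegrableOn f s ν := by
  haveI : IsFiniteMeasure (ν.restrict s) :=
    ⟨by rwa [Measure.restrict_apply_univ, lt_top_iff_ne_top]⟩
  exact (integrable_const M).mono' hm
    ((ae_restrict_iff' hs).2 (Eventually.of_forall (by
      simpa [Real.norm_eq_abs] using hb)))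

private lemma abs_sub_le' (a b : ℝ) : |a - b| ≤ |a| + |b| := by
  calc |a - b| = |a + -b| := by rw [sub_eq_add_neg]
  _ ≤ |a| + |-b| := abs_add_le _ _
  _ = |a| + |b| := by rw [abs_neg]

/-- Absolute continuity of the moving boundary (equation (6.5)): for `ϱ`
nondecreasing right-continuous (a Stieltjes function) and `I` bounded,
nondecreasing, right-continuous with `I ≡ 0` on `(-∞,0]`, one has, for `t ≥ 0`,
`∫₀^{d̄} ϱ(r) I(t-r) dr
  = ϱ(0) ∫₀^t I(s) ds - ϱ(d̄) ∫₀^t I(s-d̄) ds + ∫₀^t (∫_{(0,d̄]} I(s-r) dμ_ϱ(r)) ds`;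
in particular `t ↦ ∫_{t-d̄}^t ϱ(t-s) I(s) ds` is absolutely continuous on `[0,∞)`. -/
theorem moving_boundary_absolutely_continuous
    (dbar : ℝ) (hdbar : 0 < dbar) (ϱ : StieltjesFunction ℝ) (I : ℝ → ℝ)
    (hIbdd : ∃ M, ∀ s, |I s| ≤ M) (hImono : Monotone I)
    (hIrc : ∀ s, ContinuousWithinAt I (Ici s) s)
    (hI0 : ∀ s ≤ (0 : ℝ), I s = 0) :
    (∀ t ≥ (0 : ℝ),
      (∫ r in (0 : ℝ)..dbar, ϱ r * I (t - r))
        = ϱ 0 * (∫ s in (0 : ℝ)..t, I s) - ϱ dbar * (∫ s in (0 : ℝ)..t, I (s - dbar))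
          + ∫ s in (0 : ℝ)..t, (∫ r in Ioc (0 : ℝ) dbar, I (s - r) ∂ϱ.measure)) ∧
    ∃ D : ℝ → ℝ, (∀ T > (0 : ℝ), IntegrableOn D (Icc 0 T)) ∧
      ∀ t ≥ (0 : ℝ),
        (∫ s in (t - dbar)..t, ϱ (t - s) * I s) = ∫ s in (0 : ℝ)..t, D s := by
  obtain ⟨M, hM⟩ := hIbdd
  have hMnn : 0 ≤ M := (abs_nonneg _).trans (hM 0)
  have hImeas : Measurable I := hImono.measurable
  set μ := ϱ.measure with hμdef
  have hμIoc : ∀ a b : ℝ, μ (Ioc a b) = ENNReal.ofReal (ϱ b - ϱ a) := fun a b =>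
    ϱ.measure_Ioc a b
  have hμfin : μ (Ioc 0 dbar) ≠ ⊤ := by rw [hμIoc]; exact ENNReal.ofReal_ne_top
  haveI hfinμ : IsFiniteMeasure (μ.restrict (Ioc 0 dbar)) :=
    ⟨by rw [Measure.restrict_apply_univ]; exact lt_top_iff_ne_top.2 hμfin⟩
  -- interval integrability of monotone functions
  have hIint : ∀ a b : ℝ, IntervalIntegrable I volume a b := fun a b =>
    hImono.intervalIntegrable
  -- the primitive of I
  set G : ℝ → ℝ := fun x => ∫ s in (0:ℝ)..x, I s with hGdef
  have hGadd : ∀ x y : ℝ, G y - G x = ∫ s in x..y, I s := fun x y => by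
    rw [hGdef]
    exact intervalIntegral.integral_interval_sub_left (hIint 0 y) (hIint 0 x)
  have hInonneg : ∀ s, 0 ≤ I s := by
    intro s
    rcases le_or_gt s 0 with h | h
    · simp [hI0 s h]
    · rw [← hI0 0 le_rfl]; exact hImono h.le
  have hGmono : Monotone G := by
    intro x y hxy
    have h1 : 0 ≤ G y - G x := by
      rw [hGadd x y]
      exact intervalIntegral.integral_nonneg hxy fun u _ => hInonneg u
    linarith
  have hGmeas : Measurable G := hGmono.measurable
  have hGbound : ∀ x, |G x| ≤ M * |x| := by
    intro x
    have := intervalIntegral.norm_integral_le_of_norm_le_const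
      (C := M) (f := I) (a := (0:ℝ)) (b := x) (fun u _ => by
        simpa [Real.norm_eq_abs] using hM u)
    simpa [Real.norm_eq_abs] using this
  -- key translation identity
  have key1 : ∀ c : ℝ, 0 ≤ c → ∀ t : ℝ, (∫ s in (0:ℝ)..t, I (s - c)) = G (t - c) := by
    intro c hc t
    rw [intervalIntegral.integral_comp_sub_right I c]
    have h0 : (∫ s in (0 - c)..(0:ℝ), I s) = 0 := by
      have heq : EqOn I 0 (uIcc (0 - c) 0) := by
        intro x hx
        rw [uIcc_of_le (by linarith)] at hx
        exact hI0 x hx.2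
      rw [intervalIntegral.integral_congr heq]
      simp
    have hadj := intervalIntegral.integral_add_adjacent_intervals
      (hIint (0 - c) 0) (hIint 0 (t - c))
    rw [← hadj, h0, zero_add]
  -- the swapped inner integral for the LHS
  have inner_u : ∀ t : ℝ, ∀ u ∈ Ioc (0:ℝ) dbar,
      (∫ r in Ioc (0:ℝ) dbar, (Ici u).indicator (fun r' => I (t - r')) r)
        = G (t - u) - G (t - dbar) := by
    intro t u hu
    rw [setIntegral_indicator measurableSet_Ici]
    have h2 : Ioc (0:ℝ) dbar ∩ Ici u = Icc u dbar := by
      ext x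
      simp only [mem_inter_iff, mem_Ioc, mem_Ici, mem_Icc]
      constructor
      · rintro ⟨⟨_, hx2⟩, hx3⟩; exact ⟨hx3, hx2⟩
      · rintro ⟨hx1, hx2⟩; exact ⟨⟨lt_of_lt_of_le hu.1 hx1, hx2⟩, hx1⟩
    rw [h2, integral_Icc_eq_integral_Ioc, ← intervalIntegral.integral_of_le hu.2,
      intervalIntegral.integral_comp_sub_left (fun s => I s) t]
    exact (hGadd (t - dbar) (t - u)).symm
  have inner_r : ∀ t : ℝ, ∀ r ∈ Ioc (0:ℝ) dbar,
      (∫ u in Ioc (0:ℝ) dbar, (Ici u).indicator (fun r' => I (t - r')) r ∂μ)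
        = (ϱ r - ϱ 0) * I (t - r) := by
    intro t r hr
    have h1 : ∀ u, (Ici u).indicator (fun r' => I (t - r')) r
        = (Iic r).indicator (fun _ => I (t - r)) u := by
      intro u
      simp only [indicator_apply, mem_Ici, mem_Iic]
    simp_rw [h1]
    rw [setIntegral_indicator measurableSet_Iic, setIntegral_const]
    have h2 : Ioc (0:ℝ) dbar ∩ Iic r = Ioc 0 r := by
      ext x
      simp only [mem_inter_iff, mem_Ioc, mem_Iic]
      constructor
      · rintro ⟨⟨hx1, _⟩, hx3⟩; exact ⟨hx1, hx3⟩
      · rintro ⟨hx1, hx2⟩; exact ⟨⟨hx1, hx2.trans hr.2⟩, hx2⟩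
    rw [h2, measureReal_def, hμIoc, ENNReal.toReal_ofReal (by linarith [ϱ.mono hr.1.le] : (0:ℝ) ≤ ϱ r - ϱ 0)]
    rw [smul_eq_mul]
  -- part 1 : the main identity
  have part1 : ∀ t ≥ (0 : ℝ),
      (∫ r in (0 : ℝ)..dbar, ϱ r * I (t - r))
        = ϱ 0 * (∫ s in (0 : ℝ)..t, I s) - ϱ dbar * (∫ s in (0 : ℝ)..t, I (s - dbar))
          + ∫ s in (0 : ℝ)..t, (∫ r in Ioc (0 : ℝ) dbar, I (s - r) ∂μ) := by
    intro t ht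
    -- integrabilities
    have hmeas1 : Measurable fun r => I (t - r) :=
      hImeas.comp (measurable_const.sub measurable_id)
    have hint1 : IntegrableOn (fun r => ϱ 0 * I (t - r)) (Ioc 0 dbar) volume := by
      refine bdd_integrableOn measurableSet_Ioc (by simp [Real.volume_Ioc])
        ((hmeas1.const_mul _).aestronglyMeasurable) (M := |ϱ 0| * M) fun x _ => ?_
      rw [abs_mul]
      exact mul_le_mul_of_nonneg_left (hM _) (abs_nonneg _)
    have hϱmeas : Measurable fun r => ϱ r := ϱ.mono.measurable
    have hint2 : IntegrableOn (fun r => (ϱ r - ϱ 0) * I (t - r)) (Ioc 0 dbar) volume := by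
      refine bdd_integrableOn measurableSet_Ioc (by simp [Real.volume_Ioc])
        (((hϱmeas.sub measurable_const).mul hmeas1).aestronglyMeasurable)
        (M := (|ϱ dbar| + 2 * |ϱ 0|) * M) fun x hx => ?_
      rw [abs_mul]
      refine mul_le_mul (le_trans (abs_sub_le' _ _) ?_) (hM _) (abs_nonneg _)
        (by positivity)
      have h1 : |ϱ x| ≤ |ϱ dbar| + |ϱ 0| := by
        rw [abs_le]
        have h2 : ϱ 0 ≤ ϱ x := ϱ.mono hx.1.le
        have h3 : ϱ x ≤ ϱ dbar := ϱ.mono hx.2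
        constructor
        · have := neg_abs_le (ϱ 0)
          have := abs_nonneg (ϱ dbar)
          linarith
        · have := le_abs_self (ϱ dbar)
          have := abs_nonneg (ϱ 0)
          linarith
      linarith
    -- the double-integral function
    have hFmeas : Measurable fun p : ℝ × ℝ =>
        (Ici p.1).indicator (fun r' => I (t - r')) p.2 := by
      have : (fun p : ℝ × ℝ => (Ici p.1).indicator (fun r' => I (t - r')) p.2)
          = {q : ℝ × ℝ | q.1 ≤ q.2}.indicator (fun q => I (t - q.2)) := by
        funext p
        simp only [indicator_apply, mem_Ici, mem_setOf_eq]
      rw [this]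
      exact (hImeas.comp (measurable_const.sub measurable_snd)).indicator
        (measurableSet_le measurable_fst measurable_snd)
    have hFint : Integrable (Function.uncurry fun u r =>
        (Ici u).indicator (fun r' => I (t - r')) r)
        ((μ.restrict (Ioc 0 dbar)).prod (volume.restrict (Ioc 0 dbar))) := by
      haveI : IsFiniteMeasure (volume.restrict (Ioc (0:ℝ) dbar)) :=
        ⟨by rw [Measure.restrict_apply_univ]; simp [Real.volume_Ioc]⟩
      refine (integrable_const M).mono' hFmeas.aestronglyMeasurable
        (Eventually.of_forall fun p => ?_)
      obtain ⟨u, r⟩ := p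
      simp only [Function.uncurry_apply_pair, Real.norm_eq_abs, indicator_apply]
      split
      · exact hM _
      · simpa using hMnn
    -- step for LHS
    have hGb2 : ∀ u ∈ Ioc (0:ℝ) dbar, |G (t - u)| ≤ M * (|t| + dbar) := by
      intro u hu
      refine (hGbound (t - u)).trans (mul_le_mul_of_nonneg_left ?_ hMnn)
      have : |t - u| ≤ |t| + |u| := abs_sub_le' t u
      have : |u| = u := abs_of_pos hu.1
      calc |t - u| ≤ |t| + |u| := abs_sub_le' t u
        _ ≤ |t| + dbar := by rw [this]; linarith [hu.2]
    have hintG : IntegrableOn (fun u => G (t - u)) (Ioc 0 dbar) μ :=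
      bdd_integrableOn measurableSet_Ioc hμfin
        ((hGmeas.comp (measurable_const.sub measurable_id)).aestronglyMeasurable)
        hGb2
    have stepLHS : (∫ r in (0 : ℝ)..dbar, ϱ r * I (t - r))
        = ϱ 0 * (G t - G (t - dbar))
          + ((∫ u in Ioc (0:ℝ) dbar, G (t - u) ∂μ) - (ϱ dbar - ϱ 0) * G (t - dbar)) := by
      rw [intervalIntegral.integral_of_le hdbar.le]
      have hsplit : (fun r => ϱ r * I (t - r))
          = fun r => ϱ 0 * I (t - r) + (ϱ r - ϱ 0) * I (t - r) := by
        funext r; ring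
      rw [hsplit, integral_add hint1 hint2]
      congr 1
      · -- first piece
        rw [MeasureTheory.integral_const_mul, ← intervalIntegral.integral_of_le hdbar.le,
          intervalIntegral.integral_comp_sub_left (fun s => I s) t]
        congr 1
        rw [← hGadd (t - dbar) (t - 0), sub_zero]
      · -- second piece, via Fubini
        have e1 : (∫ r in Ioc (0:ℝ) dbar, (ϱ r - ϱ 0) * I (t - r))
            = ∫ r in Ioc (0:ℝ) dbar,
                (∫ u in Ioc (0:ℝ) dbar, (Ici u).indicator (fun r' => I (t - r')) r ∂μ) := by
          refine setIntegral_congr_fun measurableSet_Ioc fun r hr => ?_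
          exact (inner_r t r hr).symm
        have e2 := MeasureTheory.integral_integral_swap hFint
        have e3 : (∫ u in Ioc (0:ℝ) dbar,
              (∫ r in Ioc (0:ℝ) dbar, (Ici u).indicator (fun r' => I (t - r')) r) ∂μ)
            = ∫ u in Ioc (0:ℝ) dbar, (G (t - u) - G (t - dbar)) ∂μ := by
          refine setIntegral_congr_fun measurableSet_Ioc fun u hu => ?_
          exact inner_u t u hu
        rw [e1, ← e2, e3, integral_sub hintG (integrable_const _), setIntegral_const,
          measureReal_def, hμIoc, ENNReal.toReal_ofReal (by linarith [ϱ.mono hdbar.le] : (0:ℝ) ≤ ϱ dbar - ϱ 0),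
          smul_eq_mul]
    -- step for RHS third term
    have stepRHS : (∫ s in (0 : ℝ)..t, (∫ r in Ioc (0 : ℝ) dbar, I (s - r) ∂μ))
        = ∫ u in Ioc (0:ℝ) dbar, G (t - u) ∂μ := by
      rw [intervalIntegral.integral_of_le ht]
      haveI : IsFiniteMeasure (volume.restrict (Ioc (0:ℝ) t)) :=
        ⟨by rw [Measure.restrict_apply_univ]; simp [Real.volume_Ioc]⟩
      have hF2int : Integrable (Function.uncurry fun u s => I (s - u))
          ((μ.restrict (Ioc 0 dbar)).prod (volume.restrict (Ioc 0 t))) := by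
        refine (integrable_const M).mono'
          ((hImeas.comp (measurable_snd.sub measurable_fst)).aestronglyMeasurable)
          (Eventually.of_forall fun p => ?_)
        rw [Real.norm_eq_abs]
        exact hM _
      have e2 := MeasureTheory.integral_integral_swap hF2int
      rw [← e2]
      refine setIntegral_congr_fun measurableSet_Ioc fun u hu => ?_
      rw [← intervalIntegral.integral_of_le ht]
      exact key1 u hu.1.le t
    rw [stepLHS, stepRHS, key1 dbar hdbar.le t]
    have : (∫ s in (0:ℝ)..t, I s) = G t := rfl
    rw [this]
    ring
  refine ⟨part1, ?_⟩
  -- Part 2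
  set h : ℝ → ℝ := fun s => ∫ u in Ioc (0:ℝ) dbar, I (s - u) ∂μ with hhdef
  have hhmeas : StronglyMeasurable h := by
    apply MeasureTheory.StronglyMeasurable.integral_prod_right
      (f := fun s u => I (s - u))
    exact (hImeas.comp (measurable_fst.sub measurable_snd)).stronglyMeasurable
  have hhbdd : ∀ s, |h s| ≤ M * (μ (Ioc (0:ℝ) dbar)).toReal := by
    intro s
    rw [hhdef]
    have := norm_setIntegral_le_of_norm_le_const (μ := μ) (s := Ioc (0:ℝ) dbar)
      (lt_top_iff_ne_top.2 hμfin) (C := M) (f := fun u => I (s - u))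
      (fun x _ => by rw [Real.norm_eq_abs]; exact hM _)
    rw [Real.norm_eq_abs, measureReal_def] at this
    linarith [this]
  set D : ℝ → ℝ := fun s => ϱ 0 * I s - ϱ dbar * I (s - dbar) + h s with hDdef
  have hDmeas : Measurable D := by
    apply Measurable.add
    · exact ((hImeas.const_mul _).sub
        ((hImeas.comp (measurable_id.sub measurable_const)).const_mul _))
    · exact hhmeas.measurable
  have hDbdd : ∀ s, |D s| ≤ |ϱ 0| * M + |ϱ dbar| * M + M * (μ (Ioc (0:ℝ) dbar)).toReal := by
    intro s
    calc |D s| ≤ |ϱ 0 * I s - ϱ dbar * I (s - dbar)| + |h s| := abs_add_le _ _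
      _ ≤ (|ϱ 0 * I s| + |ϱ dbar * I (s - dbar)|) + |h s| := by
          linarith [abs_sub_le' (ϱ 0 * I s) (ϱ dbar * I (s - dbar))]
      _ ≤ |ϱ 0| * M + |ϱ dbar| * M + M * (μ (Ioc (0:ℝ) dbar)).toReal := by
          rw [abs_mul, abs_mul]
          have h1 := mul_le_mul_of_nonneg_left (hM s) (abs_nonneg (ϱ 0))
          have h2 := mul_le_mul_of_nonneg_left (hM (s - dbar)) (abs_nonneg (ϱ dbar))
          linarith [hhbdd s]
  refine ⟨D, fun T hT => ?_, fun t ht => ?_⟩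
  · exact bdd_integrableOn measurableSet_Icc (by simp [Real.volume_Icc])
      hDmeas.aestronglyMeasurable (fun x _ => hDbdd x)
  · -- change of variables and conclude
    have hcv : (∫ s in (t - dbar)..t, ϱ (t - s) * I s)
        = ∫ r in (0 : ℝ)..dbar, ϱ r * I (t - r) := by
      have := intervalIntegral.integral_comp_sub_left
        (a := t - dbar) (b := t) (fun x => ϱ x * I (t - x)) t
      simp only [sub_sub_cancel, sub_self] at this
      rw [← this]
    have hDint : ∀ c : ℝ, IntervalIntegrable D volume 0 c := by
      intro c
      apply MeasureTheory.IntegrableOn.intervalIntegrable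
      exact bdd_integrableOn measurableSet_uIcc (by rw [Real.volume_interval]; exact ENNReal.ofReal_ne_top)
        hDmeas.aestronglyMeasurable (fun x _ => hDbdd x)
    have hhint : ∀ c : ℝ, IntervalIntegrable h volume 0 c := by
      intro c
      apply MeasureTheory.IntegrableOn.intervalIntegrable
      exact bdd_integrableOn measurableSet_uIcc (by rw [Real.volume_interval]; exact ENNReal.ofReal_ne_top)
        hhmeas.measurable.aestronglyMeasurable (fun x _ => hhbdd x)
    have hint1 : ∀ c : ℝ, IntervalIntegrable (fun s => ϱ 0 * I s) volume 0 c := fun c =>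
      (hIint 0 c).const_mul _
    have hint2 : ∀ c : ℝ, IntervalIntegrable (fun s => ϱ dbar * I (s - dbar)) volume 0 c :=
      fun c => ((hImono.comp (fun a b hab => by simpa using sub_le_sub_right hab dbar)
        : Monotone fun s => I (s - dbar)).intervalIntegrable).const_mul _
    have hsplit : (∫ s in (0:ℝ)..t, D s)
        = ϱ 0 * (∫ s in (0 : ℝ)..t, I s) - ϱ dbar * (∫ s in (0 : ℝ)..t, I (s - dbar))
          + ∫ s in (0 : ℝ)..t, h s := by
      rw [hDdef]
      rw [intervalIntegral.integral_add ((hint1 t).sub (hint2 t)) (hhint t),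
        intervalIntegral.integral_sub (hint1 t) (hint2 t),
        intervalIntegral.integral_const_mul, intervalIntegral.integral_const_mul]
    rw [hcv, part1 t ht, ← hsplit]
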